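/- Let α/β = [a_1, ..., a_n] be a 1-regular continued fraction with a_1, a_2 > 0. Then the crossing number of α/β equals the sum of the |a_i| minus the number of indices i with a_i a_{i+1} < 0: cn(α/β) = Σ_{i=1}^n |a_i| - #{i : a_i a_{i+1} < 0}. -/

import Mathlib

/-- Evaluation of a finite continued fraction `[a₁, a₂, …, aₙ] = a₁ + 1/(a₂ + 1/(⋯ + 1/aₙ))`. -/
def cf : List ℤ → ℚ
  | [] => 0
  | a :: l => a + (cf l)⁻¹

/-- A continued fraction `[a₁, …, aₙ]` is 1-regular: all entries are nonzero,
`a_{n-1} aₙ > 0`, and there are no two consecutive sign changes. -/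
def OneRegular (l : List ℤ) : Prop :=
  (∀ a ∈ l, a ≠ 0) ∧
  (2 ≤ l.length → 0 < l[l.length - 2]! * l[l.length - 1]!) ∧
  (∀ i, i + 2 < l.length → l[i]! * l[i + 1]! < 0 → 0 < l[i + 1]! * l[i + 2]!)

/-- The number of sign changes `#{i : aᵢ a_{i+1} < 0}` of a continued fraction. -/
def signChanges (l : List ℤ) : ℕ :=
  ((List.range (l.length - 1)).filter fun i => decide (l[i]! * l[i + 1]! < 0)).length

/-! ### Auxiliary rational lemmas -/

lemma den_sub_int (r : ℚ) (n : ℤ) : (r - n).den = r.den := by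
  have hd : (0:ℤ) < (r.den : ℤ) := mod_cast r.pos
  have hco : IsCoprime r.num (r.den : ℤ) := by
    rw [Int.isCoprime_iff_gcd_eq_one]; exact r.reduced
  have hco2 : (r.num - n * r.den).natAbs.Coprime (r.den : ℤ).natAbs := by
    have h2 : IsCoprime (r.num - n * r.den) (r.den : ℤ) := by
      simpa [sub_eq_add_neg, mul_comm] using hco.add_mul_left_left (-n)
    rwa [Int.isCoprime_iff_gcd_eq_one] at h2
  have key : (r - n : ℚ) = ((r.num - n * r.den : ℤ) : ℚ) / ((r.den : ℤ) : ℚ) := by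
    push_cast
    rw [sub_div, Rat.num_div_den]
    congr 1
    field_simp
  have := Rat.den_div_eq_of_coprime hd hco2
  rw [key]
  exact_mod_cast this

lemma den_inv_of (r : ℚ) (h0 : 0 < r) : (r⁻¹).den = r.num.natAbs := by
  have hn : (0:ℤ) < r.num := Rat.num_pos.mpr h0
  have hco2 : (r.den : ℤ).natAbs.Coprime r.num.natAbs := by
    simpa using (r.reduced).symm
  have key : r⁻¹ = ((r.den : ℤ) : ℚ) / ((r.num : ℤ) : ℚ) := by
    rw [Rat.inv_def]; exact Rat.divInt_eq_div _ _
  have h := Rat.den_div_eq_of_coprime hn hco2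
  have h6 : (r.num.natAbs : ℤ) = r.num := Int.natAbs_of_nonneg hn.le
  rw [key]
  exact_mod_cast h.trans h6.symm

lemma num_lt_den_of (r : ℚ) (h : r < 1) : r.num < (r.den : ℤ) := by
  have hd : (0:ℚ) < (r.den : ℚ) := mod_cast r.pos
  rw [show r = (r.num : ℚ) / (r.den : ℚ) from (Rat.num_div_den r).symm,
    div_lt_one hd] at h
  exact_mod_cast h

/-- Sum of the positive continued fraction expansion of `r` (for `r ≥ 1`). -/
def S (r : ℚ) : ℤ :=
  if _h : r.den = 1 then r.num
  else ⌊r⌋ + S (r - ⌊r⌋)⁻¹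
termination_by r.den
decreasing_by
  have h1 : (r - (⌊r⌋:ℤ)).den = r.den := den_sub_int r ⌊r⌋
  have hpos : 0 < r - (⌊r⌋:ℤ) := by
    rcases lt_or_eq_of_le (Int.floor_le r) with h' | h'
    · linarith
    · exfalso; apply _h; rw [← h']; simp
  have hlt : r - (⌊r⌋:ℤ) < 1 := by
    have := Int.lt_floor_add_one r
    linarith
  have h2 := den_inv_of _ hpos
  have h3 := num_lt_den_of _ hlt
  have h5 : 0 < (r - (⌊r⌋:ℤ)).num := Rat.num_pos.mpr hpos
  rw [h1] at h3
  rw [h2]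
  omega

lemma den_lt_num_of (r : ℚ) (h : 1 < r) : (r.den : ℤ) < r.num := by
  have hd : (0:ℚ) < (r.den : ℚ) := mod_cast r.pos
  rw [show r = (r.num : ℚ) / (r.den : ℚ) from (Rat.num_div_den r).symm,
    lt_div_iff₀ hd, one_mul] at h
  exact_mod_cast h

lemma S_intCast (n : ℤ) : S (n:ℚ) = n := by rw [S.eq_1]; simp

lemma S_one : S 1 = 1 := by simpa using S_intCast 1

lemma S_add_int (u : ℚ) (a : ℤ) : S (u + a) = S u + a := by
  have hden : (u + a).den = u.den := by
    have := den_sub_int u (-a); simpa using this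
  by_cases h : u.den = 1
  · have hu : u = (u.num : ℚ) := ((Rat.den_eq_one_iff u).mp h).symm
    have h3 : u + (a:ℚ) = ((u.num + a : ℤ) : ℚ) := by rw [hu]; exact_mod_cast rfl
    rw [h3, S_intCast]
    conv_rhs => rw [hu, S_intCast]
  · rw [S.eq_1]
    conv_rhs => rw [S.eq_1]
    simp only [hden, h, dif_neg, not_false_iff]
    have hf : ⌊u + (a:ℚ)⌋ = ⌊u⌋ + a := Int.floor_add_intCast u a
    rw [hf]
    have h4 : u + (a:ℚ) - ((⌊u⌋ + a : ℤ):ℚ) = u - (⌊u⌋:ℚ) := by push_cast; ring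
    rw [h4]
    ring

lemma S_inv (v : ℚ) (hv : 1 ≤ v) : S v⁻¹ = S v := by
  rcases eq_or_lt_of_le hv with h1 | h1
  · rw [← h1]; norm_num
  · have hv0 : 0 < v := by linarith
    have hnum : (v.den : ℤ) < v.num := den_lt_num_of v h1
    have hden : (v⁻¹).den = v.num.natAbs := den_inv_of v hv0
    have hne : (v⁻¹).den ≠ 1 := by
      rw [hden]
      have : 1 ≤ (v.den : ℤ) := mod_cast v.pos
      omega
    rw [S.eq_1]
    simp only [hne, dif_neg, not_false_iff]
    have hinvpos : 0 < v⁻¹ := by positivity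
    have hinvlt : v⁻¹ < 1 := by
      rw [inv_lt_one_iff₀]; right; exact h1
    have hfloor : ⌊v⁻¹⌋ = 0 := by
      rw [Int.floor_eq_zero_iff]; constructor <;> simp [hinvpos.le, hinvlt]
    rw [hfloor]
    simp

lemma S_add_inv (x : ℤ) (v : ℚ) (hv : 1 ≤ v) : S ((x:ℚ) + v⁻¹) = x + S v := by
  rw [add_comm, S_add_int, S_inv v hv]; ring

lemma S_mirror_aux (y : ℚ) (hy : 2 ≤ y) : S (y / (y - 1)) = S y := by
  have h1 : (1:ℚ) ≤ y - 1 := by linarith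
  have hne : y - 1 ≠ 0 := by linarith
  have key : y / (y - 1) = (1:ℤ) + (y - 1)⁻¹ := by
    field_simp
    push_cast; ring
  rw [key, S_add_inv 1 (y-1) h1]
  have : y = (y - 1) + (1:ℤ) := by push_cast; ring
  rw [this, S_add_int]
  ring

lemma S_mirror (y : ℚ) (hy : 1 < y) : S (y / (y - 1)) = S y := by
  rcases le_or_gt 2 y with h | h
  · exact S_mirror_aux y h
  · set z := y / (y - 1) with hz
    have hy1 : (0:ℚ) < y - 1 := by linarith
    have hz2 : 2 ≤ z := by
      rw [hz, le_div_iff₀ hy1]; linarith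
    have hback : z / (z - 1) = y := by
      rw [hz]; field_simp
      ring
    rw [← hback]
    exact (S_mirror_aux z hz2).symm

/-- The crossing-number function on values. -/
def T (r : ℚ) : ℤ := if 1 ≤ r then S r else S ((1 - r)⁻¹)

/-! ### Continued fraction and list lemmas -/

lemma cf_nil : cf [] = 0 := rfl

lemma cf_cons (a : ℤ) (l : List ℤ) : cf (a :: l) = a + (cf l)⁻¹ := rfl

lemma cf_neg : ∀ l : List ℤ, cf (l.map (fun x => -x)) = - cf l
  | [] => by simp [cf]
  | a :: t => by
      simp only [List.map_cons, cf_cons, cf_neg t, inv_neg]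
      push_cast; ring

lemma getElemBang_map_neg (l : List ℤ) (i : ℕ) (h : i < l.length) :
    (l.map (fun x => -x))[i]! = -(l[i]!) := by
  rw [getElem!_pos (l.map (fun x => -x)) i (by simpa using h), getElem!_pos l i h]
  simp

lemma sc_singleton (a : ℤ) : signChanges [a] = 0 := rfl

lemma sc_cons (a b : ℤ) (u : List ℤ) :
    signChanges (a :: b :: u) = (if a * b < 0 then 1 else 0) + signChanges (b :: u) := by
  unfold signChanges
  simp only [List.length_cons]
  rw [show u.length + 1 + 1 - 1 = u.length + 1 from rfl,
    show u.length + 1 - 1 = u.length from rfl]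
  rw [List.range_succ_eq_map, List.filter_cons]
  have h0 : (decide ((a :: b :: u)[0]! * (a :: b :: u)[0 + 1]! < 0)) = decide (a * b < 0) := by
    simp
  rw [h0, List.filter_map]
  have hcong : List.filter
      ((fun i => decide ((a :: b :: u)[i]! * (a :: b :: u)[i + 1]! < 0)) ∘ Nat.succ)
      (List.range u.length) =
      List.filter (fun i => decide ((b :: u)[i]! * (b :: u)[i + 1]! < 0))
      (List.range u.length) := by
    apply List.filter_congr
    intro i _
    simp [Function.comp]
  rw [hcong]
  by_cases h : a * b < 0 <;> simp [h, Nat.add_comm]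

lemma sc_neg (l : List ℤ) : signChanges (l.map (fun x => -x)) = signChanges l := by
  unfold signChanges
  rw [List.length_map]
  congr 1
  apply List.filter_congr
  intro i hi
  rw [List.mem_range] at hi
  have h1 : i < l.length := by omega
  have h2 : i + 1 < l.length := by omega
  rw [getElemBang_map_neg l i h1, getElemBang_map_neg l (i+1) h2]
  simp

lemma abs_sum_neg (l : List ℤ) :
    ((l.map (fun x => -x)).map (fun a => |a|)).sum = (l.map (fun a => |a|)).sum := by
  rw [List.map_map]
  congr 1
  apply List.map_congr_left
  intro a _
  simp [Function.comp, abs_neg]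

lemma onereg_neg (l : List ℤ) (h : OneRegular l) : OneRegular (l.map (fun x => -x)) := by
  obtain ⟨h1, h2, h3⟩ := h
  refine ⟨?_, ?_, ?_⟩
  · intro a ha
    rw [List.mem_map] at ha
    obtain ⟨b, hb, rfl⟩ := ha
    simpa using h1 b hb
  · intro hlen
    rw [List.length_map] at hlen
    simp only [List.length_map]
    have e1 := getElemBang_map_neg l (l.length - 2) (by omega)
    have e2 := getElemBang_map_neg l (l.length - 1) (by omega)
    rw [e1, e2, neg_mul_neg]
    exact h2 hlen
  · intro i hi hneg
    rw [List.length_map] at hi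
    have e1 := getElemBang_map_neg l i (by omega)
    have e2 := getElemBang_map_neg l (i+1) (by omega)
    have e3 := getElemBang_map_neg l (i+2) (by omega)
    rw [e1, e2, neg_mul_neg] at hneg
    rw [e2, e3, neg_mul_neg]
    exact h3 i hi hneg

lemma onereg_tail (a : ℤ) (t : List ℤ) (h : OneRegular (a :: t)) (ht : t ≠ []) :
    OneRegular t := by
  obtain ⟨h1, h2, h3⟩ := h
  refine ⟨fun x hx => h1 x (List.mem_cons_of_mem a hx), ?_, ?_⟩
  · intro hlen
    have hlen2 : 2 ≤ (a :: t).length := by simp; omega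
    have := h2 hlen2
    rw [show (a :: t).length - 2 = (t.length - 2) + 1 by simp; omega,
      show (a :: t).length - 1 = (t.length - 1) + 1 by simp; omega] at this
    simpa using this
  · intro i hi hneg
    have hi2 : (i + 1) + 2 < (a :: t).length := by simp; omega
    have := h3 (i+1) hi2 (by simpa using hneg)
    simpa [show i + 1 + 1 = i + 2 from rfl, show i + 1 + 2 = i + 3 from rfl] using this

/-- For a nonempty list of positive entries, `cf` is at least `1` and the sum is `S (cf)`. -/
lemma pos_cf_sum : ∀ q : List ℤ, (∀ x ∈ q, 0 < x) → q ≠ [] →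
    1 ≤ cf q ∧ q.sum = S (cf q)
  | [], _, hne => absurd rfl hne
  | a :: t, hq, _ => by
      have ha : 0 < a := hq a List.mem_cons_self
      have ha1 : (1:ℚ) ≤ (a:ℚ) := by exact_mod_cast ha
      rcases eq_or_ne t [] with rfl | ht
      · rw [cf_cons, cf_nil]
        norm_num
        refine ⟨ha1, ?_⟩
        rw [show ((a:ℚ)) = ((a:ℤ):ℚ) from rfl, S_intCast]
      · obtain ⟨hv1, hvs⟩ := pos_cf_sum t (fun x hx => hq x (List.mem_cons_of_mem a hx)) ht
        have hvinv : 0 < (cf t)⁻¹ := by positivity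
        constructor
        · rw [cf_cons]; linarith
        · rw [cf_cons, List.sum_cons, S_add_inv a (cf t) hv1, hvs]

/-- Main induction: value positivity and the crossing number formula for 1-regular lists. -/
lemma main_aux : ∀ n : ℕ, ∀ l : List ℤ, l.length ≤ n → OneRegular l → l ≠ [] →
    0 < l[0]! →
    (0 < cf l) ∧ (2 ≤ l[0]! → 1 < cf l) ∧ (1 < l.length → 0 < l[1]! → 1 < cf l) ∧
    T (cf l) = ((l.map (fun a => |a|)).sum : ℤ) - (signChanges l : ℤ) := by
  intro n
  induction n with
  | zero => intro l hl _ hne _; interval_cases h : l.length <;> simp_all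
  | succ n IH =>
    intro l hlen hreg hne h0
    match l with
    | [] => exact absurd rfl hne
    | [a] =>
      have ha : 0 < a := by simpa using h0
      have ha1 : (1:ℚ) ≤ (a:ℚ) := by exact_mod_cast ha
      have hcf : cf [a] = (a:ℚ) := by rw [cf_cons, cf_nil]; norm_num
      refine ⟨by rw [hcf]; linarith, ?_, by simp, ?_⟩
      · intro h2a
        rw [hcf]
        exact_mod_cast h2a
      · rw [hcf, T, if_pos ha1, S_intCast, sc_singleton]
        simp [abs_of_pos ha]
    | a :: b :: u =>
      have ha : 0 < a := by simpa using h0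
      have ha1 : (1:ℚ) ≤ (a:ℚ) := by exact_mod_cast ha
      have hb0 : b ≠ 0 := hreg.1 b (by simp)
      have hreg_t : OneRegular (b :: u) := onereg_tail a (b :: u) hreg (by simp)
      have hlen_t : (b :: u).length ≤ n := by
        simp only [List.length_cons] at hlen ⊢; omega
      have habs : ((a :: b :: u).map (fun x => |x|)).sum
          = |a| + ((b :: u).map (fun x => |x|)).sum := by simp
      rcases hb0.lt_or_gt with hb | hb
      · -- b < 0 : use the negated tail
        set nt : List ℤ := (b :: u).map (fun x => -x) with hnt
        have hnt_reg : OneRegular nt := onereg_neg _ hreg_t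
        have hnt_len : nt.length ≤ n := by simpa [hnt] using hlen_t
        have hnt_ne : nt ≠ [] := by simp [hnt]
        have hnt0 : 0 < nt[0]! := by
          simp only [hnt, List.map_cons]
          simpa using hb
        obtain ⟨hy0, hy2, hy1, hTy⟩ := IH nt hnt_len hnt_reg hnt_ne hnt0
        set y := cf nt with hy
        have hyneg : cf (b :: u) = -y := by
          rw [hy, hnt, cf_neg]; ring
        -- show 1 < y
        have hylt : 1 < y := by
          rcases le_or_gt b (-2) with hb2 | hb2
          · apply hy2
            simp only [hnt, List.map_cons]
            rw [getElem!_pos _ 0 (by simp)]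
            simp
            omega
          · -- b = -1
            have hbeq : b = -1 := by omega
            match u with
            | [] =>
              exfalso
              have := hreg.2.1 (by simp)
              simp [hbeq] at this
              omega
            | c :: u' =>
              have h3 := hreg.2.2 0 (by simp) (by simp; nlinarith)
              have hc : c < 0 := by
                simp [hbeq] at h3
                nlinarith
              apply hy1
              · simp [hnt]
              · simp only [hnt, List.map_cons]
                rw [getElem!_pos _ 1 (by simp)]
                simp
                omega
        have hyinv0 : 0 < y⁻¹ := by positivity
        have hyinv1 : y⁻¹ < 1 := by rw [inv_lt_one_iff₀]; right; exact hylt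
        have hcfl : cf (a :: b :: u) = (a:ℚ) - y⁻¹ := by
          rw [cf_cons, hyneg, inv_neg]; ring
        -- bookkeeping
        have hsc : (signChanges (a :: b :: u) : ℤ) = 1 + (signChanges nt : ℤ) := by
          rw [sc_cons, ← sc_neg (b :: u), ← hnt]
          have : a * b < 0 := by nlinarith
          simp [this]
        have habs2 : ((b :: u).map (fun x => |x|)).sum = ((nt.map (fun x => |x|)).sum : ℤ) := by
          rw [hnt, abs_sum_neg]
        have hTyS : S y = ((nt.map (fun a => |a|)).sum : ℤ) - (signChanges nt : ℤ) := by
          rw [← hTy, T, if_pos hylt.le]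
        refine ⟨by rw [hcfl]; linarith, ?_, ?_, ?_⟩
        · intro h2a
          have : (2:ℚ) ≤ (a:ℚ) := by exact_mod_cast h2a
          rw [hcfl]; linarith
        · intro _ hpos
          exfalso
          have : (a :: b :: u)[1]! = b := by simp
          rw [this] at hpos
          omega
        · rcases eq_or_lt_of_le (show (1:ℤ) ≤ a from ha) with haeq | ha2
          · -- a = 1
            have ha1' : a = 1 := haeq.symm
            have hlt1 : cf (a :: b :: u) < 1 := by
              rw [hcfl, ha1']; push_cast; linarith
            rw [T, if_neg (by linarith)]
            have : (1 : ℚ) - cf (a :: b :: u) = y⁻¹ := by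
              rw [hcfl, ha1']; push_cast; ring
            rw [this, inv_inv]
            rw [habs, habs2, hsc, hTyS, ha1']
            simp
          · -- 2 ≤ a
            have h2a : 2 ≤ a := ha2
            have h2a' : (2:ℚ) ≤ (a:ℚ) := by exact_mod_cast h2a
            have hge1 : (1:ℚ) ≤ cf (a :: b :: u) := by rw [hcfl]; linarith
            rw [T, if_pos hge1]
            have hyy : (1:ℚ) ≤ y / (y - 1) := by
              rw [le_div_iff₀ (by linarith)]; linarith
            have hkey : cf (a :: b :: u) = ((a - 1 : ℤ):ℚ) + (y / (y-1))⁻¹ := by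
              rw [hcfl]
              have hy0' : y ≠ 0 := by linarith
              have hy1' : y - 1 ≠ 0 := by linarith
              push_cast
              field_simp
              ring
            rw [hkey, S_add_inv (a-1) _ hyy, S_mirror y hylt, hTyS]
            rw [habs, habs2, hsc]
            have : |a| = a := abs_of_pos ha
            rw [this]
            push_cast
            ring
      · -- 0 < b
        have hb0' : 0 < (b :: u)[0]! := by simpa using hb
        obtain ⟨hv0, hv2, hv1, hTv⟩ := IH (b :: u) hlen_t hreg_t (by simp) hb0'
        set v := cf (b :: u) with hv
        have hcfl : cf (a :: b :: u) = (a:ℚ) + v⁻¹ := by rw [cf_cons]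
        have hvinv0 : 0 < v⁻¹ := by positivity
        have hsc : (signChanges (a :: b :: u) : ℤ) = (signChanges (b :: u) : ℤ) := by
          rw [sc_cons]
          have : ¬ (a * b < 0) := by nlinarith
          simp [this]
        rcases le_or_gt 1 v with hv1' | hv1'
        · -- 1 ≤ v
          have hgt1 : 1 < cf (a :: b :: u) := by rw [hcfl]; linarith
          refine ⟨by linarith, fun _ => hgt1, fun _ _ => hgt1, ?_⟩
          rw [T, if_pos hgt1.le, hcfl, S_add_inv a v hv1']
          rw [habs, hsc]
          have hTveq : S v = ((b :: u).map (fun x => |x|)).sum - (signChanges (b :: u) : ℤ) := by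
            rw [← hTv, T, if_pos hv1']
          rw [hTveq, abs_of_pos ha]
          push_cast
          ring
        · -- v < 1 : head of tail is 1 followed by a negative entry
          set w := (1 - v)⁻¹ with hw
          have h1v : 0 < 1 - v := by linarith
          have hwgt : 1 < w := by
            rw [hw]
            exact (one_lt_inv₀ h1v).mpr (by linarith)
          have hvw : v⁻¹ = w / (w - 1) := by
            rw [hw]
            have : (1 - v) ≠ 0 := by linarith
            field_simp
            rw [sub_sub_cancel, div_self hv0.ne']
          have hwinv : (1:ℚ) ≤ w / (w - 1) := by
            rw [le_div_iff₀ (by linarith)]; linarith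
          have hvinvgt : 1 < v⁻¹ := by
            rw [hvw, lt_div_iff₀ (by linarith)]; linarith
          have hgt1 : 1 < cf (a :: b :: u) := by rw [hcfl]; linarith
          refine ⟨by linarith, fun _ => hgt1, fun _ _ => hgt1, ?_⟩
          rw [T, if_pos hgt1.le, hcfl]
          have hkey : (a:ℚ) + v⁻¹ = (w/(w-1)) + ((a:ℤ):ℚ) := by rw [hvw]; push_cast; ring
          rw [hkey, S_add_int, ]
          have hmir : S (w/(w-1)) = S w := by
            have : w/(w-1) = w/(w-1) := rfl
            exact S_mirror w hwgt
          rw [hmir]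
          have hTveq : S w = ((b :: u).map (fun x => |x|)).sum - (signChanges (b :: u) : ℤ) := by
            rw [← hTv, T, if_neg (by linarith), ← hw]
          rw [hTveq, habs, hsc, abs_of_pos ha]
          push_cast
          ring

/-- The crossing number `cn(α/β)` of a rational `> 1` is the sum `q₁ + ⋯ + qₙ` of the
partial quotients of any classical continued fraction expansion with positive entries.
If `α/β = [a₁, …, aₙ]` is 1-regular with `a₁, a₂ > 0`, then
`cn(α/β) = Σ |aᵢ| - #{i : aᵢ a_{i+1} < 0}`. -/
theorem crossing_number_of_one_regular (l : List ℤ) (hn : 2 ≤ l.length)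
    (hreg : OneRegular l) (h1 : 0 < l[0]!) (h2 : 0 < l[1]!)
    (q : List ℤ) (hq : ∀ x ∈ q, 0 < x) (hval : cf q = cf l) :
    q.sum = (l.map fun a => |a|).sum - (signChanges l : ℤ) := by
  have hne : l ≠ [] := by intro h; rw [h] at hn; simp at hn
  obtain ⟨hpos, _, hgt, hT⟩ := main_aux l.length l le_rfl hreg hne h1
  have hgt1 : 1 < cf l := hgt (by omega) h2
  have hqne : q ≠ [] := by
    intro h
    rw [h, cf_nil] at hval
    rw [← hval] at hgt1
    norm_num at hgt1
  obtain ⟨_, hsum⟩ := pos_cf_sum q hq hqne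
  rw [hsum, hval]
  rw [← hT, T, if_pos hgt1.le]
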